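/- Completeness of GenGammaPath: for every element of F_γ, written as d·b with d a Dyck word, there exist n ≥ 0 and an array t = (t_0,…,t_n) of nonnegative integers with t_0 > 0 such that d is the output word w_n of GenGammaPath(t). -/

import Mathlib

/-- The two-letter alphabet {a, b}. -/
inductive Letter : Type
  | a : Letter
  | b : Letter
deriving DecidableEq, BEq, Repr

/-- Words over the alphabet {a, b}. -/
abbrev Word := List Letter

/-- δ(w) = |w|_a − |w|_b. -/
def delta (w : Word) : ℤ := (w.count Letter.a : ℤ) - (w.count Letter.b : ℤ)

/-- A Dyck word: δ(w) = 0 and δ(p) ≥ 0 for every prefix p of w. -/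
def IsDyck (w : Word) : Prop := delta w = 0 ∧ ∀ p : Word, p <+: w → 0 ≤ delta p

/-- Membership in D_n: w = d·b with d a Dyck word of length 2n. -/
def InD (n : ℕ) (w : Word) : Prop :=
  ∃ d : Word, IsDyck d ∧ d.length = 2 * n ∧ w = d ++ [Letter.b]

/-- Exchanging the letters a and b. -/
def Letter.flip : Letter → Letter
  | .a => .b
  | .b => .a

/-- The complement w̄ of a word w. -/
def comp (w : Word) : Word := w.map Letter.flip

/-- Sym(w): the complement of the mirror (reversal) of w. -/
def sym (w : Word) : Word := comp w.reverse

/-- A palindrome: a word equal to its mirror. -/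
def Palindrome (w : Word) : Prop := w.reverse = w

/-- w' is a conjugate of w: w = u·v and w' = v·u. -/
def Conj (w w' : Word) : Prop := ∃ u v : Word, w = u ++ v ∧ w' = v ++ u

/-- u is the principal prefix of w: the shortest prefix of w with δ(u) maximal. -/
def IsPrincipalPrefix (u w : Word) : Prop :=
  u <+: w ∧ (∀ p : Word, p <+: w → delta p ≤ delta u) ∧
    (∀ p : Word, p <+: w → delta p = delta u → u.length ≤ p.length)

/-- The graph of the map γ: writing w = u·v·b with u the principal prefix of w,
    γ(w) = v̄·b·ū. -/
def GammaRel (w w' : Word) : Prop :=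
  ∃ u v : Word, IsPrincipalPrefix u w ∧ w = u ++ v ++ [Letter.b] ∧
    w' = comp v ++ [Letter.b] ++ comp u

/-- F_n: the fixed points of γ in D_n. -/
def InF (n : ℕ) (w : Word) : Prop := InD n w ∧ GammaRel w w

/-- F_γ = ⋃_{n ≥ 1} F_n. -/
def InFgamma (w : Word) : Prop := ∃ n : ℕ, 1 ≤ n ∧ InF n w

/-- x^y: concatenation of the word x with itself y times. -/
def wpow (x : Word) : ℕ → Word
  | 0 => []
  | k + 1 => x ++ wpow x k
/-- The words (u_i, w_i) built by GenGammaPath on input array t with degree n.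
    When n is even the construction starts from a^{t₀}·b^{t₀} and the "a-rule"
    is used at even steps; when n is odd it starts from b^{t₀}·a^{t₀} and the
    "a-rule" is used at odd steps (i.e. exactly when i ≡ n (mod 2)). -/
def gen (n : ℕ) (t : ℕ → ℕ) : ℕ → Word × Word
  | 0 =>
    if n % 2 = 0 then
      (List.replicate (t 0 - 1) Letter.a,
       List.replicate (t 0) Letter.a ++ List.replicate (t 0) Letter.b)
    else
      (List.replicate (t 0 - 1) Letter.b,
       List.replicate (t 0) Letter.b ++ List.replicate (t 0) Letter.a)
  | i + 1 =>
    let p := gen n t i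
    if (i + 1) % 2 = n % 2 then
      let u' := sym p.1 ++ wpow ([Letter.a] ++ p.2) (t (i + 1))
      (u', u' ++ [Letter.a] ++ p.2 ++ [Letter.b] ++ sym u')
    else
      let u' := sym p.1 ++ wpow ([Letter.b] ++ p.2) (t (i + 1))
      (u', u' ++ [Letter.b] ++ p.2 ++ [Letter.a] ++ sym u')

section Basics
open Letter

lemma letter_flip_flip (c : Letter) : c.flip.flip = c := by cases c <;> rfl

lemma flip_inj : Function.Injective Letter.flip := by
  intro x y h; cases x <;> cases y <;> simp_all [Letter.flip]

lemma comp_append (u v : Word) : comp (u ++ v) = comp u ++ comp v := List.map_append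

lemma comp_comp (w : Word) : comp (comp w) = w := by
  simp [comp, List.map_map, Function.comp_def, letter_flip_flip]

lemma comp_nil : comp [] = [] := rfl

lemma comp_cons (c : Letter) (w : Word) : comp (c :: w) = c.flip :: comp w := rfl

lemma comp_length (w : Word) : (comp w).length = w.length := List.length_map _

lemma comp_inj {u v : Word} (h : comp u = comp v) : u = v := by
  have := congrArg comp h; rwa [comp_comp, comp_comp] at this

lemma comp_replicate (k : ℕ) (c : Letter) :
    comp (List.replicate k c) = List.replicate k c.flip := List.map_replicate

lemma count_comp_a (w : Word) : (comp w).count Letter.a = w.count Letter.b := by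
  induction w with
  | nil => rfl
  | cons c w ih => cases c <;> simp [comp_cons, Letter.flip, ih, List.count_cons] <;> decide

lemma count_comp_b (w : Word) : (comp w).count Letter.b = w.count Letter.a := by
  induction w with
  | nil => rfl
  | cons c w ih => cases c <;> simp [comp_cons, Letter.flip, ih, List.count_cons] <;> decide

lemma delta_comp (w : Word) : delta (comp w) = - delta w := by
  simp only [delta, count_comp_a, count_comp_b]; ring

lemma delta_append (u v : Word) : delta (u ++ v) = delta u + delta v := by
  simp [delta, List.count_append]; ring

lemma delta_nil : delta [] = 0 := rfl

lemma delta_a : delta [Letter.a] = 1 := rfl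

lemma delta_b : delta [Letter.b] = -1 := rfl

lemma delta_reverse (w : Word) : delta w.reverse = delta w := by
  simp [delta, List.count_reverse]

lemma sym_append (u v : Word) : sym (u ++ v) = sym v ++ sym u := by
  simp [sym, List.reverse_append, comp_append]

lemma sym_comp (w : Word) : sym (comp w) = w.reverse := by
  simp [sym, comp, List.map_reverse, List.map_map, Function.comp_def, letter_flip_flip]

lemma comp_sym (w : Word) : comp (sym w) = w.reverse := by
  simp [sym, comp_comp]

lemma sym_length (w : Word) : (sym w).length = w.length := by simp [sym, comp_length]

lemma comp_reverse (w : Word) : comp w.reverse = (comp w).reverse := by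
  simp [comp, List.map_reverse]

end Basics

section More
open Letter

lemma wpow_zero (x : Word) : wpow x 0 = [] := rfl
lemma wpow_succ (x : Word) (k : ℕ) : wpow x (k+1) = x ++ wpow x k := rfl

lemma comp_wpow (x : Word) (k : ℕ) : comp (wpow x k) = wpow (comp x) k := by
  induction k with
  | zero => rfl
  | succ k ih => rw [wpow_succ, comp_append, ih, wpow_succ]

lemma wpow_succ' (x : Word) (k : ℕ) : wpow x (k+1) = wpow x k ++ x := by
  induction k with
  | zero => simp [wpow_zero, wpow_succ]
  | succ m ih =>
      rw [wpow_succ x (m+1), ih, ← List.append_assoc, ← wpow_succ, ih]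

lemma reverse_wpow (x : Word) (k : ℕ) : (wpow x k).reverse = wpow x.reverse k := by
  induction k with
  | zero => rfl
  | succ k ih => rw [wpow_succ, List.reverse_append, ih, wpow_succ']

-- prefix helpers
lemma prefix_eq_take {p w : Word} (h : p <+: w) : p = w.take p.length :=
  List.prefix_iff_eq_take.mp h

lemma prefix_of_append_le {p A B : Word} (h : p <+: A ++ B) (hl : p.length ≤ A.length) :
    p <+: A := by
  have h1 : p = (A ++ B).take p.length := prefix_eq_take h
  rw [List.take_append_of_le_length hl] at h1
  rw [h1]; exact List.take_prefix _ _

lemma pp_unique {u u' w : Word} (h1 : IsPrincipalPrefix u w) (h2 : IsPrincipalPrefix u' w) :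
    u = u' := by
  have hd : delta u = delta u' := le_antisymm (h2.2.1 u h1.1) (h1.2.1 u' h2.1)
  have hl1 : u.length ≤ u'.length := h1.2.2 u' h2.1 hd.symm
  have hl2 : u'.length ≤ u.length := h2.2.2 u h1.1 hd
  have hl : u.length = u'.length := le_antisymm hl1 hl2
  rw [prefix_eq_take h1.1, prefix_eq_take h2.1, hl]

lemma a_comm_replicate : ∀ (U : Word), [Letter.a] ++ U = U ++ [Letter.a] →
    U = List.replicate U.length Letter.a := by
  intro U
  induction U with
  | nil => intro _; rfl
  | cons c U ih =>
      intro h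
      simp only [List.cons_append, List.singleton_append, List.cons.injEq] at h
      obtain ⟨rfl, h2⟩ := h
      have hU : U = List.replicate U.length Letter.a := ih (by simpa using h2)
      simp only [List.length_cons, List.replicate_succ]
      rw [← hU]

end More

section Mid
open Letter List

lemma dyck_head {x : Word} (hx : IsDyck x) (hne : x ≠ []) : ∃ y, x = Letter.a :: y := by
  cases x with
  | nil => exact absurd rfl hne
  | cons c y =>
      refine ⟨y, ?_⟩
      have hp : [c] <+: c :: y := ⟨y, rfl⟩
      have := hx.2 [c] hp
      cases c with
      | a => rfl
      | b => simp [delta_b] at this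

lemma dyck_suffix_nonpos {x A B : Word} (hx : IsDyck x) (h : x = A ++ B) : delta B ≤ 0 := by
  have hA : 0 ≤ delta A := hx.2 A ⟨B, h.symm⟩
  have : delta A + delta B = 0 := by rw [← delta_append, ← h, hx.1]
  omega

lemma peel (x0 : Word) : ∀ (N : ℕ) (U : Word), U.length ≤ N →
    x0 ++ [Letter.a] ++ U = U ++ [Letter.a] ++ comp x0 →
    ∃ U₀ i, U₀.length ≤ x0.length ∧ (x0 ++ [Letter.a] ++ U₀ = U₀ ++ [Letter.a] ++ comp x0) ∧
      U = U₀ ++ wpow ([Letter.a] ++ comp x0) i := by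
  intro N
  induction N with
  | zero =>
      intro U hlen heq
      have : U = [] := List.length_eq_zero_iff.mp (Nat.le_zero.mp hlen)
      subst this
      exact ⟨[], 0, by simp, heq, by simp [wpow_zero]⟩
  | succ N ih =>
      intro U hlen heq
      by_cases hle : U.length ≤ x0.length
      · exact ⟨U, 0, hle, heq, by simp [wpow_zero]⟩
      · have hlen2 : x0.length + 1 ≤ U.length := by omega
        have hpre : x0 ++ [Letter.a] <+: U := by
          have h1 : x0 ++ [Letter.a] <+: x0 ++ [Letter.a] ++ U := ⟨U, rfl⟩
          rw [heq] at h1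
          refine prefix_of_append_le (p := x0 ++ [Letter.a]) (A := U)
            (B := [Letter.a] ++ comp x0) ?_ (by simpa using hlen2)
          simpa [List.append_assoc] using h1
        obtain ⟨U₃, hU3⟩ := hpre
        have heq3 : x0 ++ [Letter.a] ++ U₃ = U₃ ++ [Letter.a] ++ comp x0 := by
          rw [← hU3] at heq
          have heq' : (x0 ++ [Letter.a]) ++ (x0 ++ [Letter.a] ++ U₃) =
              (x0 ++ [Letter.a]) ++ (U₃ ++ [Letter.a] ++ comp x0) := by
            simpa [List.append_assoc] using heq
          exact List.append_cancel_left heq'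
        have hl3 : U₃.length ≤ N := by
          have := congrArg List.length hU3
          simp at this
          omega
        obtain ⟨U₀, i, h1, h2, h3⟩ := ih U₃ hl3 heq3
        refine ⟨U₀, i + 1, h1, h2, ?_⟩
        rw [← hU3, h3, wpow_succ]
        calc (x0 ++ [Letter.a]) ++ (U₀ ++ wpow ([Letter.a] ++ comp x0) i)
            = (x0 ++ [Letter.a] ++ U₀) ++ wpow ([Letter.a] ++ comp x0) i := by
              simp [List.append_assoc]
          _ = (U₀ ++ [Letter.a] ++ comp x0) ++ wpow ([Letter.a] ++ comp x0) i := by rw [h2]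
          _ = U₀ ++ (([Letter.a] ++ comp x0) ++ wpow ([Letter.a] ++ comp x0) i) := by
              simp [List.append_assoc]

lemma exchange {x0 U₀ : Word} (h : x0 ++ [Letter.a] ++ U₀ = U₀ ++ [Letter.a] ++ comp x0) :
    ∀ i, wpow (x0 ++ [Letter.a]) i ++ U₀ = U₀ ++ wpow ([Letter.a] ++ comp x0) i := by
  intro i
  induction i with
  | zero => simp [wpow_zero]
  | succ i ih =>
      calc wpow (x0 ++ [Letter.a]) (i+1) ++ U₀
          = (x0 ++ [Letter.a]) ++ (wpow (x0 ++ [Letter.a]) i ++ U₀) := by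
            rw [wpow_succ]; simp [List.append_assoc]
        _ = (x0 ++ [Letter.a]) ++ (U₀ ++ wpow ([Letter.a] ++ comp x0) i) := by rw [ih]
        _ = (x0 ++ [Letter.a] ++ U₀) ++ wpow ([Letter.a] ++ comp x0) i := by
            simp [List.append_assoc]
        _ = (U₀ ++ ([Letter.a] ++ comp x0)) ++ wpow ([Letter.a] ++ comp x0) i := by
            rw [h]; simp [List.append_assoc]
        _ = U₀ ++ wpow ([Letter.a] ++ comp x0) (i+1) := by
            rw [wpow_succ]; simp [List.append_assoc]

lemma comp_sym_eq (z : Word) : comp (sym z) = sym (comp z) := by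
  rw [comp_sym, sym_comp]

lemma comp_a_single : comp [Letter.a] = [Letter.b] := rfl
lemma comp_b_single : comp [Letter.b] = [Letter.a] := rfl

lemma comp_ub (q w : Word) (T : ℕ) :
    comp (sym q ++ wpow ([Letter.b] ++ w) T) =
      sym (comp q) ++ wpow ([Letter.a] ++ comp w) T := by
  rw [comp_append, comp_wpow, comp_append, comp_b_single, comp_sym_eq]

lemma comp_ua (q w : Word) (T : ℕ) :
    comp (sym q ++ wpow ([Letter.a] ++ w) T) =
      sym (comp q) ++ wpow ([Letter.b] ++ comp w) T := by
  rw [comp_append, comp_wpow, comp_append, comp_a_single, comp_sym_eq]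

lemma gen_flip (n n' : ℕ) (h : n % 2 ≠ n' % 2) (t t' : ℕ → ℕ) :
    ∀ i, (∀ j, j ≤ i → t j = t' j) →
      gen n t i = (comp (gen n' t' i).1, comp (gen n' t' i).2) := by
  intro i
  induction i with
  | zero =>
      intro ht
      have h0 := ht 0 (le_refl 0)
      rcases Nat.mod_two_eq_zero_or_one n with hn | hn <;>
        rcases Nat.mod_two_eq_zero_or_one n' with hn' | hn' <;>
          simp [gen, hn, hn', h0, comp_append, comp_replicate, Letter.flip] at h ⊢
  | succ i ih =>
      intro ht
      have hti := ih (fun j hj => ht j (Nat.le_succ_of_le hj))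
      have hcond : ((i + 1) % 2 = n % 2) ↔ ¬ ((i + 1) % 2 = n' % 2) := by
        rcases Nat.mod_two_eq_zero_or_one n with hn | hn <;>
          rcases Nat.mod_two_eq_zero_or_one n' with hn' | hn' <;>
            rcases Nat.mod_two_eq_zero_or_one (i+1) with hi | hi <;>
              simp [hn, hn', hi] at h ⊢
      have hts := ht (i+1) (le_refl _)
      by_cases hc : (i + 1) % 2 = n % 2
      · have hc' : ¬ ((i + 1) % 2 = n' % 2) := hcond.mp hc
        simp only [gen, if_pos hc, if_neg hc', hti, hts, Prod.mk.injEq]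
        refine ⟨(comp_ub _ _ _).symm, ?_⟩
        rw [← comp_ub]
        simp only [comp_append, comp_b_single, comp_a_single, comp_sym_eq]
      · have hc' : (i + 1) % 2 = n' % 2 := by
          by_contra hcc
          exact hc (hcond.mpr hcc)
        simp only [gen, if_neg hc, if_pos hc', hti, hts, Prod.mk.injEq]
        refine ⟨(comp_ua _ _ _).symm, ?_⟩
        rw [← comp_ua]
        simp only [comp_append, comp_b_single, comp_a_single, comp_sym_eq]

end Mid

section PP
open Letter List

lemma dyck_prefix_delta_nonneg {x p : Word} (hx : IsDyck x) (h : p <+: x) : 0 ≤ delta p :=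
  hx.2 p h

lemma pp_construct {x' U₀ R₁ : Word} (hx' : IsDyck x')
    (h1 : x' = U₀ ++ [Letter.a] ++ R₁)
    (h2 : x' = comp R₁ ++ [Letter.b] ++ comp U₀) :
    IsPrincipalPrefix (U₀ ++ [Letter.a]) (x' ++ [Letter.b]) := by
  have hU₀x : U₀ <+: x' := ⟨[Letter.a] ++ R₁, by rw [h1]; simp [List.append_assoc]⟩
  have hδU₀ : 0 ≤ delta U₀ := hx'.2 U₀ hU₀x
  -- f1
  have f1 : ∀ p, p <+: U₀ → delta p ≤ delta U₀ := by
    intro p ⟨q, hq⟩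
    have hsuf : delta (comp q) ≤ 0 := by
      refine dyck_suffix_nonpos hx' (A := comp R₁ ++ [Letter.b] ++ comp p) ?_
      rw [h2, ← hq, comp_append]
      simp [List.append_assoc]
    have hdq : 0 ≤ delta q := by rw [delta_comp] at hsuf; omega
    have := congrArg delta hq
    rw [delta_append] at this
    omega
  -- f2
  have f2 : ∀ p, p <+: R₁ → -delta U₀ - 1 ≤ delta p := by
    intro p ⟨q, hq⟩
    have hpre : U₀ ++ [Letter.a] ++ p <+: x' := ⟨q, by rw [h1, ← hq]; simp [List.append_assoc]⟩
    have := hx'.2 _ hpre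
    rw [delta_append, delta_append, delta_a] at this
    omega
  -- key equation
  have eq2' : R₁ ++ [Letter.a] ++ U₀ = comp U₀ ++ [Letter.b] ++ comp R₁ := by
    have := congrArg comp h2
    rw [comp_append, comp_append, comp_comp, comp_comp, comp_b_single, h1,
      comp_append, comp_append, comp_a_single] at this
    exact this.symm
  -- f3
  have f3 : ∀ p, p <+: R₁ → delta p ≤ 0 := by
    intro p hp
    have hpZ : p <+: comp U₀ ++ [Letter.b] ++ comp R₁ := by
      rw [← eq2']
      exact hp.trans ⟨[Letter.a] ++ U₀, by simp [List.append_assoc]⟩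
    by_cases hlen : p.length ≤ U₀.length
    · have hpU : p <+: comp U₀ := by
        refine prefix_of_append_le (B := [Letter.b] ++ comp R₁) ?_ (by simpa [comp_length] using hlen)
        simpa [List.append_assoc] using hpZ
      obtain ⟨q, hq⟩ := hpU
      have : comp p <+: U₀ := ⟨comp q, by rw [← comp_append, hq, comp_comp]⟩
      have h0 : 0 ≤ delta (comp p) := hx'.2 _ (this.trans hU₀x)
      rw [delta_comp] at h0
      omega
    · by_cases hlen2 : p.length ≤ U₀.length + 1
      · -- p = comp U₀ ++ [b]
        have hpl : p.length = U₀.length + 1 := by omega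
        have : p = comp U₀ ++ [Letter.b] := by
          have h3 := prefix_eq_take (prefix_of_append_le (A := comp U₀ ++ [Letter.b])
            (B := comp R₁) (by simpa [List.append_assoc] using hpZ)
            (by simp [comp_length]; omega))
          rw [h3, List.take_of_length_le (by simp [comp_length]; omega)]
        rw [this, delta_append, delta_comp, delta_b]
        omega
      · -- comp U₀ ++ [b] <+: p
        have hZpre : comp U₀ ++ [Letter.b] <+: p := by
          rcases List.prefix_or_prefix_of_prefix
            (⟨comp R₁, by simp [List.append_assoc]⟩ :
              comp U₀ ++ [Letter.b] <+: comp U₀ ++ [Letter.b] ++ comp R₁) hpZ with h | h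
          · exact h
          · exfalso
            have := h.length_le
            simp [comp_length] at this
            omega
        obtain ⟨s, hs⟩ := hZpre
        have hsR : s <+: comp R₁ := by
          obtain ⟨r, hr⟩ := hpZ
          rw [← hs] at hr
          exact ⟨r, List.append_cancel_left
            (show comp U₀ ++ [Letter.b] ++ (s ++ r) = comp U₀ ++ [Letter.b] ++ comp R₁ from
              by simpa [List.append_assoc] using hr)⟩
        have : comp s <+: R₁ := by
          obtain ⟨q, hq⟩ := hsR
          exact ⟨comp q, by rw [← comp_append, hq, comp_comp]⟩
        have hf2 := f2 _ this
        rw [delta_comp] at hf2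
        have := congrArg delta hs
        rw [delta_append, delta_append, delta_comp, delta_b] at this
        omega
  -- assemble
  have hδR : delta R₁ ≤ 0 := f3 R₁ (List.prefix_refl _)
  refine ⟨⟨R₁ ++ [Letter.b], by rw [h1]; simp [List.append_assoc]⟩, ?_, ?_⟩
  · intro p hp
    by_cases hlen : p.length ≤ U₀.length
    · have hpU : p <+: U₀ := by
        refine prefix_of_append_le (B := [Letter.a] ++ R₁ ++ [Letter.b]) ?_ hlen
        have : x' ++ [Letter.b] = U₀ ++ ([Letter.a] ++ R₁ ++ [Letter.b]) := by
          rw [h1]; simp [List.append_assoc]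
        rwa [this] at hp
      have := f1 p hpU
      rw [delta_append, delta_a]
      omega
    · have hu'p : U₀ ++ [Letter.a] <+: p := by
        rcases List.prefix_or_prefix_of_prefix
          (show U₀ ++ [Letter.a] <+: x' ++ [Letter.b] from
            ⟨R₁ ++ [Letter.b], by rw [h1]; simp [List.append_assoc]⟩) hp with h | h
        · exact h
        · have hpl : p.length = U₀.length + 1 := by
            have := h.length_le; simp at this; omega
          have hpe : p = U₀ ++ [Letter.a] := by
            rw [prefix_eq_take h, hpl, List.take_of_length_le (by simp)]
          exact hpe ▸ List.prefix_refl _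
      obtain ⟨q, hq⟩ := hu'p
      have hqR : q <+: R₁ ++ [Letter.b] := by
        obtain ⟨r, hr⟩ := hp
        have : x' ++ [Letter.b] = U₀ ++ [Letter.a] ++ (R₁ ++ [Letter.b]) := by
          rw [h1]; simp [List.append_assoc]
        rw [this, ← hq] at hr
        exact ⟨r, List.append_cancel_left
          (show U₀ ++ [Letter.a] ++ (q ++ r) = U₀ ++ [Letter.a] ++ (R₁ ++ [Letter.b]) from
            by simpa [List.append_assoc] using hr)⟩
      have hδq : delta q ≤ 0 := by
        by_cases hql : q.length ≤ R₁.length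
        · exact f3 q (prefix_of_append_le hqR hql)
        · have hqeq : q = R₁ ++ [Letter.b] := by
            have h3 := prefix_eq_take hqR
            have : q.length = R₁.length + 1 := by
              have := hqR.length_le; simp at this; omega
            rw [h3, this, List.take_of_length_le (by simp)]
          rw [hqeq, delta_append, delta_b]
          omega
      have := congrArg delta hq
      rw [delta_append] at this
      omega
  · intro p hp hd
    by_contra hlt
    push_neg at hlt
    have hlen : p.length ≤ U₀.length := by simp at hlt ⊢; omega
    have hpU : p <+: U₀ := by
      refine prefix_of_append_le (B := [Letter.a] ++ R₁ ++ [Letter.b]) ?_ hlen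
      have : x' ++ [Letter.b] = U₀ ++ ([Letter.a] ++ R₁ ++ [Letter.b]) := by
        rw [h1]; simp [List.append_assoc]
      rwa [this] at hp
    have := f1 p hpU
    rw [delta_append, delta_a] at hd
    omega

end PP

section MainLemma
open Letter List

lemma sym_replicate (k : ℕ) (c : Letter) :
    sym (List.replicate k c) = List.replicate k c.flip := by
  rw [sym, List.reverse_replicate, comp_replicate]

lemma sym_a_single : sym [Letter.a] = [Letter.b] := rfl
lemma sym_b_single : sym [Letter.b] = [Letter.a] := rfl

lemma gen_succ_same (n : ℕ) (t : ℕ → ℕ) (i : ℕ) (h : (i + 1) % 2 = n % 2) :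
    gen n t (i+1) = (sym (gen n t i).1 ++ wpow ([Letter.a] ++ (gen n t i).2) (t (i+1)),
      (sym (gen n t i).1 ++ wpow ([Letter.a] ++ (gen n t i).2) (t (i+1))) ++ [Letter.a] ++
        (gen n t i).2 ++ [Letter.b] ++
        sym (sym (gen n t i).1 ++ wpow ([Letter.a] ++ (gen n t i).2) (t (i+1)))) := by
  simp only [gen, if_pos h]

lemma main_lemma : ∀ (k : ℕ) (x : Word), x.length ≤ k → x ≠ [] → IsDyck x →
    GammaRel (x ++ [Letter.b]) (x ++ [Letter.b]) →
    sym x = x ∧ ∀ u, IsPrincipalPrefix u (x ++ [Letter.b]) →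
      ∃ n t, 0 < t 0 ∧ gen n t n = (u.dropLast, x) := by
  intro k
  induction k with
  | zero =>
      intro x hk hne _ _
      exact absurd (List.length_eq_zero_iff.mp (Nat.le_zero.mp hk)) hne
  | succ k ih =>
      intro x hk hne hx hg
      obtain ⟨u₀, v₀, hpp, hw1, hw2⟩ := hg
      -- step A : delta u₀ ≥ 1
      obtain ⟨y, hy⟩ := dyck_head hx hne
      have hpa : [Letter.a] <+: x ++ [Letter.b] := by
        rw [hy]; exact ⟨y ++ [Letter.b], by simp⟩
      have hδu₀ : (1:ℤ) ≤ delta u₀ := by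
        have := hpp.2.1 [Letter.a] hpa; rwa [delta_a] at this
      -- step B : u₀ = U ++ [a]
      have hu₀ne : u₀ ≠ [] := by
        intro h; rw [h] at hδu₀; simp [delta_nil] at hδu₀
      rcases List.eq_nil_or_concat u₀ with h | ⟨U, c, hUc⟩
      · exact absurd h hu₀ne
      have hUc' : u₀ = U ++ [c] := by simpa [List.concat_eq_append] using hUc
      have hca : c = Letter.a := by
        cases c with
        | a => rfl
        | b =>
            exfalso
            have hUpre : U <+: x ++ [Letter.b] :=
              List.IsPrefix.trans ⟨[Letter.b], hUc'.symm⟩ hpp.1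
            have h1 := hpp.2.1 U hUpre
            have h2 := congrArg delta hUc'
            rw [delta_append, delta_b] at h2
            omega
      subst hca
      -- basic equations
      have hw12 : u₀ ++ v₀ ++ [Letter.b] = comp v₀ ++ [Letter.b] ++ comp u₀ := by
        rw [← hw1, ← hw2]
      have hδw : delta (x ++ [Letter.b]) = delta x - 1 := by
        rw [delta_append, delta_b]; ring
      have hδv₀ : delta v₀ = - delta u₀ := by
        have := congrArg delta hw1
        rw [hδw, hx.1, delta_append, delta_append, delta_b] at this
        omega
      have hu₀w : u₀.length ≤ x.length := by
        have hle := hpp.1.length_le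
        simp only [List.length_append, List.length_cons, List.length_nil] at hle
        have : u₀ ≠ x ++ [Letter.b] := by
          intro h
          rw [h] at hδu₀
          rw [hδw, hx.1] at hδu₀
          omega
        by_contra hcon
        push_neg at hcon
        have h1 : u₀.length = x.length + 1 := by omega
        have := prefix_eq_take hpp.1
        rw [h1, List.take_of_length_le (by simp)] at this
        exact absurd this ‹u₀ ≠ x ++ [Letter.b]›
      -- step C : m ≤ |v₀|
      have hmv : u₀.length ≤ v₀.length := by
        by_contra hcon
        push_neg at hcon
        have hcvb : comp v₀ ++ [Letter.b] <+: x ++ [Letter.b] :=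
          ⟨comp u₀, by rw [hw2]⟩
        have hcvu : comp v₀ ++ [Letter.b] <+: u₀ := by
          rcases List.prefix_or_prefix_of_prefix hcvb hpp.1 with h | h
          · exact h
          · have h1 := prefix_eq_take h
            have h2 : u₀.length ≤ (comp v₀ ++ [Letter.b]).length := h.length_le
            simp only [List.length_append, comp_length, List.length_cons,
              List.length_nil] at h2
            have h3 : u₀ = comp v₀ ++ [Letter.b] := by
              rw [prefix_eq_take h, List.take_of_length_le]
              simp only [List.length_append, comp_length, List.length_cons,
                List.length_nil]
              omega
            exact h3 ▸ List.prefix_refl _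
        obtain ⟨r, hr⟩ := hcvu
        have hcu : comp u₀ = r ++ (v₀ ++ [Letter.b]) := by
          have : (comp v₀ ++ [Letter.b]) ++ (r ++ (v₀ ++ [Letter.b])) =
              (comp v₀ ++ [Letter.b]) ++ comp u₀ := by
            rw [← hw12, ← hr]; simp [List.append_assoc]
          exact (List.append_cancel_left this).symm
        have hδr : delta r = 1 := by
          have := congrArg delta hcu
          rw [delta_comp, delta_append, delta_append, delta_b] at this
          omega
        have hrpre : comp r <+: x := by
          have hu₀c : u₀ = comp r ++ (comp v₀ ++ [Letter.a]) := by
            have := congrArg comp hcu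
            rw [comp_comp, comp_append, comp_append, comp_b_single] at this
            rw [this]
          have h1 : comp r <+: x ++ [Letter.b] :=
            List.IsPrefix.trans ⟨comp v₀ ++ [Letter.a], hu₀c.symm⟩ hpp.1
          refine prefix_of_append_le h1 ?_
          have h2 := congrArg List.length hr
          simp only [List.length_append, comp_length, List.length_cons,
            List.length_nil] at h2
          simp only [comp_length]
          omega
        have := hx.2 _ hrpre
        rw [delta_comp] at this
        omega
      -- step D : decomposition
      have hu₀cv : u₀ <+: comp v₀ := by
        refine prefix_of_append_le (B := [Letter.b] ++ comp u₀) ?_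
          (by simpa [comp_length] using hmv)
        have h1 := hpp.1
        rw [hw2] at h1
        simpa [List.append_assoc] using h1
      -- step D : decomposition
      obtain ⟨C, hC⟩ := hu₀cv
      have hvC : v₀ = C ++ [Letter.b] ++ comp U := by
        have h1 : u₀ ++ (v₀ ++ [Letter.b]) = u₀ ++ (C ++ [Letter.b] ++ comp u₀) := by
          rw [← List.append_assoc, hw12, ← hC]; simp [List.append_assoc]
        have h2 : v₀ ++ [Letter.b] = C ++ [Letter.b] ++ comp u₀ :=
          List.append_cancel_left h1
        have h3 : comp u₀ = comp U ++ [Letter.b] := by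
          rw [hUc', comp_append, comp_a_single]
        rw [h3] at h2
        have h4 : v₀ ++ [Letter.b] = (C ++ [Letter.b] ++ comp U) ++ [Letter.b] := by
          simpa [List.append_assoc] using h2
        exact List.append_cancel_right h4
      have hxdec : x = U ++ [Letter.a] ++ C ++ [Letter.b] ++ comp U := by
        have h1 : x ++ [Letter.b] = (u₀ ++ v₀) ++ [Letter.b] := by
          rw [hw1]
        have h2 : x = u₀ ++ v₀ := List.append_cancel_right h1
        rw [h2, hUc', hvC]; simp [List.append_assoc]
      have hEQ : comp C ++ [Letter.a] ++ U = U ++ [Letter.a] ++ C := by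
        have h1 : comp v₀ = comp C ++ [Letter.a] ++ U := by
          rw [hvC, comp_append, comp_append, comp_b_single, comp_comp]
        have h2 := hC
        rw [h1, hUc'] at h2
        simpa [List.append_assoc] using h2.symm
      have hδC : delta C = 0 := by
        have h1 := congrArg delta hvC
        have h2 := congrArg delta hUc'
        rw [delta_append, delta_append, delta_b, delta_comp] at h1
        rw [delta_append, delta_a] at h2
        omega
      have hCpre : ∀ p, p <+: C → delta p ≤ 0 := by
        intro p hp
        obtain ⟨s, hs⟩ := hp
        have hpre : u₀ ++ p <+: x ++ [Letter.b] :=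
          ⟨s ++ [Letter.b] ++ comp U ++ [Letter.b], by
            rw [hw1, hvC, ← hs]; simp [List.append_assoc]⟩
        have := hpp.2.1 _ hpre
        rw [delta_append] at this
        omega
      by_cases hCnil : C = []
      · -- base case : x = a^{k'+1} b^{k'+1}
        subst hCnil
        obtain ⟨k', hk'⟩ : ∃ k', U = List.replicate k' Letter.a :=
          ⟨U.length, a_comm_replicate U (by simpa [comp_nil] using hEQ)⟩
        have hxval : x = List.replicate (k' + 1) Letter.a ++
            List.replicate (k' + 1) Letter.b := by
          simp only [List.append_nil] at hxdec
          rw [hxdec, hk', comp_replicate]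
          show List.replicate k' Letter.a ++ [Letter.a] ++ [Letter.b] ++
            List.replicate k' Letter.b = _
          rw [← List.replicate_succ', List.append_assoc,
            List.singleton_append, ← List.replicate_succ]
        constructor
        · rw [hxval, sym_append, sym_replicate, sym_replicate]
          show List.replicate (k'+1) Letter.b.flip ++ List.replicate (k'+1) Letter.a.flip = _
          rfl
        · intro u hu
          have hueq : u = u₀ := pp_unique hu hpp
          refine ⟨0, fun _ => k' + 1, Nat.succ_pos _, ?_⟩
          have hdrop : u.dropLast = U := by
            rw [hueq, hUc', List.dropLast_concat]
          rw [hdrop, hk', hxval]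
          simp [gen]
      · -- inductive case
        have hx'Dyck : IsDyck (comp C) := by
          constructor
          · rw [delta_comp, hδC]; ring
          · intro p hp
            have h1 : comp p <+: C := by
              have h2 := List.IsPrefix.map Letter.flip hp
              rwa [show (comp C).map Letter.flip = C from comp_comp C] at h2
            have := hCpre _ h1
            rw [delta_comp] at this
            omega
        have hx'ne : comp C ≠ [] := by
          intro h
          have h1 : C = [] := by
            have := congrArg List.length h
            simpa [comp_length] using this
          exact hCnil h1
        have hx'len : (comp C).length ≤ k := by
          have h1 := congrArg List.length hxdec
          simp only [List.length_append, List.length_cons, List.length_nil,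
            comp_length] at h1
          simp only [comp_length]
          omega
        have hEQ' : comp C ++ [Letter.a] ++ U = U ++ [Letter.a] ++ comp (comp C) := by
          rw [comp_comp]; exact hEQ
        obtain ⟨U₀, i, hU₀len, hEQ₀, hUdec⟩ := peel (comp C) U.length U le_rfl hEQ'
        rw [comp_comp] at hEQ₀ hUdec
        -- decompose x' = comp C
        have hU₀pre : U₀ <+: comp C := by
          refine prefix_of_append_le (B := [Letter.a] ++ U₀) ?_ hU₀len
          have h1 : U₀ <+: U₀ ++ [Letter.a] ++ C :=
            ⟨[Letter.a] ++ C, by simp [List.append_assoc]⟩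
          rw [← hEQ₀] at h1
          simpa [List.append_assoc] using h1
        obtain ⟨R, hR⟩ := hU₀pre
        have hRne : R ≠ [] := by
          intro h
          rw [h, List.append_nil] at hR
          have h2 := hEQ₀
          rw [← hR] at h2
          have h1 : U₀ = comp U₀ := by
            have h3 : (U₀ ++ [Letter.a]) ++ U₀ = (U₀ ++ [Letter.a]) ++ comp U₀ := by
              have h4 := congrArg comp hR
              rw [comp_comp] at h4
              calc (U₀ ++ [Letter.a]) ++ U₀ = U₀ ++ [Letter.a] ++ U₀ := by
                    simp [List.append_assoc]
                _ = U₀ ++ [Letter.a] ++ comp U₀ := by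
                    rw [h2, h4]
                _ = (U₀ ++ [Letter.a]) ++ comp U₀ := by simp [List.append_assoc]
            exact List.append_cancel_left h3
          obtain ⟨y', hy'⟩ := dyck_head hx'Dyck hx'ne
          rw [← hR] at hy'
          rw [hy'] at h1
          simp [comp_cons, Letter.flip] at h1
        have hstep : R ++ [Letter.a] ++ U₀ = [Letter.a] ++ C := by
          have h2 := hEQ₀
          rw [← hR] at h2
          have h3 : U₀ ++ (R ++ [Letter.a] ++ U₀) =
              U₀ ++ ([Letter.a] ++ C) := by
            simpa [List.append_assoc] using h2
          exact List.append_cancel_left h3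
        obtain ⟨r₀, R', hr₀⟩ := List.exists_cons_of_ne_nil hRne
        have h3 : r₀ :: (R' ++ [Letter.a] ++ U₀) = Letter.a :: C := by
          rw [hr₀] at hstep
          simpa [List.append_assoc] using hstep
        have hr₀a : r₀ = Letter.a := ((List.cons.injEq _ _ _ _).mp h3).1
        have heq2 : R' ++ [Letter.a] ++ U₀ = C := ((List.cons.injEq _ _ _ _).mp h3).2
        have hx'1 : comp C = U₀ ++ [Letter.a] ++ R' := by
          rw [← hR, hr₀, hr₀a]; simp [List.append_assoc]
        have hx'2 : comp C = comp R' ++ [Letter.b] ++ comp U₀ := by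
          have := congrArg comp heq2
          rw [comp_append, comp_append, comp_a_single] at this
          exact this.symm
        have hppu' : IsPrincipalPrefix (U₀ ++ [Letter.a]) (comp C ++ [Letter.b]) :=
          pp_construct hx'Dyck hx'1 hx'2
        have hg' : GammaRel (comp C ++ [Letter.b]) (comp C ++ [Letter.b]) := by
          refine ⟨U₀ ++ [Letter.a], R', hppu', ?_, ?_⟩
          · rw [hx'1]
          · rw [comp_append, comp_a_single]
            conv_lhs => rw [hx'2]
            simp [List.append_assoc]
        obtain ⟨hsymx', hgenx'⟩ := ih (comp C) hx'len hx'ne hx'Dyck hg'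
        obtain ⟨n', t', ht'0, hgen'⟩ := hgenx' (U₀ ++ [Letter.a]) hppu'
        rw [List.dropLast_concat] at hgen'
        -- palindromic facts
        have hrevx' : (comp C).reverse = comp (comp C) := by
          have h1 := congrArg comp hsymx'
          rwa [comp_sym] at h1
        have hrevU₀ : U₀.reverse = U₀ := by
          have h1 : sym (comp C) = sym R' ++ ([Letter.b] ++ sym U₀) := by
            conv_lhs => rw [hx'1]
            rw [sym_append, sym_append, sym_a_single]
          rw [hsymx'] at h1
          conv_lhs at h1 => rw [hx'2]
          have h2 : comp R' ++ ([Letter.b] ++ comp U₀) =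
              sym R' ++ ([Letter.b] ++ sym U₀) := by
            simpa [List.append_assoc] using h1
          have h4 := (List.append_inj h2 (by rw [comp_length, sym_length])).2
          have h5 : comp U₀ = sym U₀ := by simpa using h4
          have h6 : comp U₀ = comp U₀.reverse := by rw [h5, sym]
          exact (comp_inj h6).symm
        have hrevC : C.reverse = comp C := by
          have h1 := congrArg comp hrevx'
          rw [comp_comp, ← comp_reverse, comp_comp] at h1
          rw [← h1]
        have hrevU : U.reverse = U := by
          rw [hUdec, List.reverse_append, reverse_wpow]
          have hz : ([Letter.a] ++ C).reverse = comp C ++ [Letter.a] := by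
            rw [List.reverse_append, hrevC]
            rfl
          have hEQ₀' : comp C ++ [Letter.a] ++ U₀ =
              U₀ ++ [Letter.a] ++ comp (comp C) := by
            rw [comp_comp]; exact hEQ₀
          have hex := exchange hEQ₀' i
          rw [comp_comp] at hex
          rw [hz, hrevU₀, hex, ← hUdec]
        have hsymU : sym U = comp U := by rw [sym, hrevU]
        have hsymC : sym C = C := by
          rw [sym, hrevC, comp_comp]
        constructor
        · -- sym x = x
          rw [hxdec]
          rw [sym_append, sym_append, sym_append, sym_append, sym_a_single,
            sym_b_single, sym_comp, hrevU, hsymC, hsymU]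
          simp [List.append_assoc]
        · intro u hu
          have hueq : u = u₀ := pp_unique hu hpp
          have hdrop : u.dropLast = U := by rw [hueq, hUc', List.dropLast_concat]
          refine ⟨n' + 1, fun j => if j = n' + 1 then i else t' j, ?_, ?_⟩
          · have h0 : (0:ℕ) ≠ n' + 1 := by omega
            simpa [h0] using ht'0
          · have hflip := gen_flip (n' + 1) n' (by omega)
              (fun j => if j = n' + 1 then i else t' j) t' n'
              (fun j hj => by simp [show j ≠ n' + 1 from by omega])
            rw [hgen'] at hflip
            simp only [comp_comp] at hflip
            rw [hdrop]
            rw [gen_succ_same (n' + 1) _ n' rfl, hflip]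
            have hT : (fun j => if j = n' + 1 then i else t' j) (n' + 1) = i := by simp
            simp only [hT, sym_comp, hrevU₀, if_true]
            rw [← hUdec, hsymU, ← hxdec]

end MainLemma

/-- Completeness of GenGammaPath: every element of F_γ, written as d·b with
    d a Dyck word, is obtained as the output w_n of GenGammaPath(t) for some
    degree n and some array t of nonnegative integers with t₀ > 0. -/
theorem genGammaPath_complete (w d : Word) (hw : InFgamma w)
    (hd : IsDyck d) (hwd : w = d ++ [Letter.b]) :
    ∃ (n : ℕ) (t : ℕ → ℕ), 0 < t 0 ∧ d = (gen n t n).2 := by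
  obtain ⟨n₁, hn₁, ⟨d₁, hd₁, hlen, hwd₁⟩, hγ⟩ := hw
  have hdd : d₁ = d := by
    have h1 : d₁ ++ [Letter.b] = d ++ [Letter.b] := by rw [← hwd₁, ← hwd]
    exact List.append_cancel_right h1
  subst hdd
  have hne : d₁ ≠ [] := by
    intro h
    rw [h] at hlen
    simp at hlen
    omega
  have hγ' : GammaRel (d₁ ++ [Letter.b]) (d₁ ++ [Letter.b]) := by
    rw [← hwd₁]; exact hγ
  obtain ⟨-, hmain⟩ := main_lemma d₁.length d₁ le_rfl hne hd₁ hγ'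
  obtain ⟨u₁, v₁, hppu, -, -⟩ := hγ'
  obtain ⟨n, t, ht0, hgen⟩ := hmain u₁ hppu
  exact ⟨n, t, ht0, by rw [hgen]⟩
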